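/- Let W be a constant algebraic Weyl tensor on ℝ^4 and define K_{ij}(x) := −(1/3) W_{μijν} x^μ x^ν / |x|^4 for x ≠ 0. Then K is transverse-traceless with respect to the Euclidean metric: Σ_i K_{ii}(x) = 0 and Σ_i ∂_i K_{ij}(x) = 0 for all x ≠ 0 and all j. -/

import Mathlib

noncomputable def proj4 (m : Fin 4) : (Fin 4 → ℝ) →L[ℝ] ℝ := ContinuousLinearMap.proj m

/-- A constant 4-tensor on `ℝ⁴` with the algebraic symmetries of the Weyl tensor. -/
def IsWeyl (W : Fin 4 → Fin 4 → Fin 4 → Fin 4 → ℝ) : Prop :=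
  (∀ k i j l, W k i j l = - W i k j l) ∧
  (∀ k i j l, W k i j l = - W k i l j) ∧
  (∀ k i j l, W k i j l = W j l k i) ∧
  (∀ k i j l, W k i j l + W i j k l + W j k i l = 0) ∧
  (∀ i j, (∑ k, W k i j k) = 0)

/-- The tensor field `K_{ij}(x) = -(1/3) W_{μijν} xᵘ xᵛ / |x|⁴` is transverse-traceless with
respect to the Euclidean metric on `ℝ⁴ \ {0}`. -/
theorem stmt_12 (W : Fin 4 → Fin 4 → Fin 4 → Fin 4 → ℝ) (hW : IsWeyl W) :
    ∀ x : Fin 4 → ℝ, x ≠ 0 →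
      ((∑ i, (-(1/3 : ℝ) * ∑ μ, ∑ ν, W μ i i ν * x μ * x ν) / (∑ m, x m ^ 2) ^ 2) = 0) ∧
      ∀ j, (∑ i, fderiv ℝ
          (fun y : Fin 4 → ℝ =>
            (-(1/3 : ℝ) * ∑ μ, ∑ ν, W μ i j ν * y μ * y ν) / (∑ m, y m ^ 2) ^ 2)
          x (Pi.single i 1)) = 0 := by
  obtain ⟨ha1, ha2, hpair, hb, htr⟩ := hW
  intro x hx
  have hr2 : (∑ m, x m ^ 2) ≠ 0 := by
    intro h
    apply hx
    funext m
    have hnn : ∀ m ∈ Finset.univ, (0:ℝ) ≤ x m ^ 2 := fun m _ => sq_nonneg _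
    have := (Finset.sum_eq_zero_iff_of_nonneg hnn).mp h m (Finset.mem_univ m)
    have : x m = 0 := by
      have := sq_eq_zero_iff.mp this
      exact this
    simpa using this
  have hD : (∑ m, x m ^ 2) ^ 2 ≠ 0 := pow_ne_zero _ hr2
  constructor
  · have hz : ∀ μ ν, (∑ i, W μ i i ν) = 0 := by
      intro μ ν
      calc ∑ i, W μ i i ν = ∑ i, W i ν μ i :=
            Finset.sum_congr rfl (fun i _ => hpair μ i i ν)
        _ = 0 := htr ν μ
    rw [← Finset.sum_div, ← Finset.mul_sum]
    have hzz : (∑ i, ∑ μ, ∑ ν, W μ i i ν * x μ * x ν) = 0 := by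
      rw [Finset.sum_comm]
      apply Finset.sum_eq_zero; intro μ _
      rw [Finset.sum_comm]
      apply Finset.sum_eq_zero; intro ν _
      rw [← Finset.sum_mul, ← Finset.sum_mul, hz, zero_mul, zero_mul]
    rw [hzz, mul_zero, zero_div]
  · intro j
    have h0 : ∀ i ν, W i i j ν = 0 := fun i ν => by have := ha1 i i j ν; linarith
    have hB : ∀ μ, (∑ i, W μ i j i) = 0 := by
      intro μ
      have h1 : ∀ i, W μ i j i = -W i μ j i := fun i => ha1 μ i j i
      rw [Finset.sum_congr rfl (fun i _ => h1 i), Finset.sum_neg_distrib, htr μ j, neg_zero]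
    have hT : (∑ i, (∑ μ, ∑ ν, W μ i j ν * x μ * x ν) * x i) = 0 := by
      have e1 : (∑ i, (∑ μ, ∑ ν, W μ i j ν * x μ * x ν) * x i)
          = ∑ i, ∑ μ, ∑ ν, W μ i j ν * x μ * x ν * x i := by
        apply Finset.sum_congr rfl; intro i _
        rw [Finset.sum_mul]
        apply Finset.sum_congr rfl; intro μ _
        rw [Finset.sum_mul]
      have e2 : (∑ i, ∑ μ, ∑ ν, W μ i j ν * x μ * x ν * x i)
          = ∑ μ, ∑ i, ∑ ν, W μ i j ν * x μ * x ν * x i := Finset.sum_comm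
      have e3 : (∑ μ, ∑ i, ∑ ν, W μ i j ν * x μ * x ν * x i)
          = ∑ a, ∑ b, ∑ ν, -(W b a j ν * x b * x ν * x a) := by
        apply Finset.sum_congr rfl; intro a _
        apply Finset.sum_congr rfl; intro b _
        apply Finset.sum_congr rfl; intro ν _
        rw [ha1 a b j ν]; ring
      have e4 : (∑ a, ∑ b, ∑ ν, -(W b a j ν * x b * x ν * x a))
          = -∑ a, ∑ b, ∑ ν, W b a j ν * x b * x ν * x a := by
        simp [Finset.sum_neg_distrib]
      rw [e1]
      have h5 : (∑ i, ∑ μ, ∑ ν, W μ i j ν * x μ * x ν * x i)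
          = -∑ i, ∑ μ, ∑ ν, W μ i j ν * x μ * x ν * x i := e2.trans (e3.trans e4)
      linarith
    -- derivatives
    have hsum : HasFDerivAt (fun y : Fin 4 → ℝ => ∑ m, y m ^ 2)
        (∑ m, ((((2:ℕ):ℝ) * x m ^ (2-1)) • proj4 m)) x :=
      HasFDerivAt.fun_sum fun m _ =>
        by have := (hasDerivAt_pow 2 (x m)).comp_hasFDerivAt x (proj4 m).hasFDerivAt; exact this
    have hden : HasFDerivAt (fun y : Fin 4 → ℝ => (∑ m, y m ^ 2) ^ 2)
        ((((2:ℕ):ℝ) * (∑ m, x m ^ 2) ^ (2-1)) •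
          ∑ m, ((((2:ℕ):ℝ) * x m ^ (2-1)) • proj4 m)) x :=
      by have := (hasDerivAt_pow 2 (∑ m, x m ^ 2)).comp_hasFDerivAt x hsum; exact this
    have hnum : ∀ i, HasFDerivAt
        (fun y : Fin 4 → ℝ => -(1/3 : ℝ) * ∑ μ, ∑ ν, W μ i j ν * y μ * y ν)
        ((-(1/3 : ℝ)) • ∑ μ, ∑ ν,
          ((W μ i j ν * x μ) • proj4 ν + x ν • ((W μ i j ν) • proj4 μ))) x := by
      intro i
      apply HasFDerivAt.const_mul
      apply HasFDerivAt.fun_sum; intro μ _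
      apply HasFDerivAt.fun_sum; intro ν _
      exact ((proj4 μ).hasFDerivAt.const_mul _).mul (proj4 ν).hasFDerivAt
    have key : ∀ i, fderiv ℝ
        (fun y : Fin 4 → ℝ =>
          (-(1/3 : ℝ) * ∑ μ, ∑ ν, W μ i j ν * y μ * y ν) / (∑ m, y m ^ 2) ^ 2)
        x (Pi.single i 1)
        = (-(1/3 : ℝ) * ∑ μ, ∑ ν, W μ i j ν * x μ * x ν) *
            (-(((∑ m, x m ^ 2) ^ 2) ^ 2)⁻¹ *
              ((2 * (∑ m, x m ^ 2)) * (2 * x i)))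
          + ((∑ m, x m ^ 2) ^ 2)⁻¹ *
            (-(1/3 : ℝ) * ((∑ μ, W μ i j i * x μ) + ∑ ν, x ν * W i i j ν)) := by
      intro i
      have h4 : HasFDerivAt
          (fun y : Fin 4 → ℝ =>
            (-(1/3 : ℝ) * ∑ μ, ∑ ν, W μ i j ν * y μ * y ν) / (∑ m, y m ^ 2) ^ 2) _ x :=
        (hnum i).mul ((hasDerivAt_inv hD).comp_hasFDerivAt x hden)
      rw [h4.fderiv]
      simp [proj4, ContinuousLinearMap.proj_apply, Pi.single_apply, mul_ite, ite_mul,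
        Finset.sum_ite_eq, Finset.sum_ite_eq', Finset.sum_add_distrib, smul_eq_mul]
      ring
    rw [Finset.sum_congr rfl (fun i _ => key i), Finset.sum_add_distrib]
    have hA : ∀ i, (∑ ν, x ν * W i i j ν) = 0 := fun i => by simp [h0]
    have hBB : (∑ i, ∑ μ, W μ i j i * x μ) = 0 := by
      rw [Finset.sum_comm]
      apply Finset.sum_eq_zero; intro μ _
      rw [← Finset.sum_mul, hB, zero_mul]
    have hfirst : (∑ i, (-(1/3 : ℝ) * ∑ μ, ∑ ν, W μ i j ν * x μ * x ν) *
        (-(((∑ m, x m ^ 2) ^ 2) ^ 2)⁻¹ * ((2 * (∑ m, x m ^ 2)) * (2 * x i)))) = 0 := by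
      have e : ∀ i, (-(1/3 : ℝ) * ∑ μ, ∑ ν, W μ i j ν * x μ * x ν) *
          (-(((∑ m, x m ^ 2) ^ 2) ^ 2)⁻¹ * ((2 * (∑ m, x m ^ 2)) * (2 * x i)))
          = ((1/3 : ℝ) * (((∑ m, x m ^ 2) ^ 2) ^ 2)⁻¹ * (4 * (∑ m, x m ^ 2))) *
            ((∑ μ, ∑ ν, W μ i j ν * x μ * x ν) * x i) := fun i => by ring
      rw [Finset.sum_congr rfl (fun i _ => e i), ← Finset.mul_sum, hT, mul_zero]
    have hsecond : (∑ i, ((∑ m, x m ^ 2) ^ 2)⁻¹ *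
        (-(1/3 : ℝ) * ((∑ μ, W μ i j i * x μ) + ∑ ν, x ν * W i i j ν))) = 0 := by
      have e : ∀ i, ((∑ m, x m ^ 2) ^ 2)⁻¹ *
          (-(1/3 : ℝ) * ((∑ μ, W μ i j i * x μ) + ∑ ν, x ν * W i i j ν))
          = (((∑ m, x m ^ 2) ^ 2)⁻¹ * -(1/3 : ℝ)) * (∑ μ, W μ i j i * x μ) := by
        intro i; rw [hA i, add_zero]; ring
      rw [Finset.sum_congr rfl (fun i _ => e i), ← Finset.mul_sum, hBB, mul_zero]
    rw [hfirst, hsecond, add_zero]
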